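/- Let E be a vector lattice over ℝ, let Y be a real vector space, let n be a positive integer, and let T : E^n → Y be an n-linear map whose restriction to (E⁺)^n is total orderization invariant. Then T is symmetric on all of E: for every permutation σ of {1,...,n} and all f_1,...,f_n ∈ E, T(f_{σ(1)},...,f_{σ(n)}) = T(f_1,...,f_n). -/

import Mathlib

open Finset

/-- `Mk x k` is `M_{k+1}(x_1,...,x_n)` (`k : Fin n` represents the 1-indexed index `k+1`):
the supremum over all subsets `I` of `{1,...,n}` of cardinality `n + 1 - (k+1) = n - k` of
the infima `⋀_{i ∈ I} x i`. -/
def Mk {L : Type*} [Lattice L] {n : ℕ} (x : Fin n → L) (k : Fin n) : L :=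
  ((univ : Finset (Fin n)).powersetCard (n - k.val)).attach.sup'
    (attach_nonempty_iff.mpr (powersetCard_nonempty.mpr (by simp)))
    fun I => I.1.inf' (card_pos.mp (by
      have h := (mem_powersetCard.mp I.2).2
      have hk := k.isLt
      omega)) x

lemma Mk_perm_le {L : Type*} [Lattice L] {n : ℕ} (x : Fin n → L) (σ : Equiv.Perm (Fin n))
    (k : Fin n) : Mk (fun i => x (σ i)) k ≤ Mk x k := by
  apply Finset.sup'_le
  rintro ⟨I, hI⟩ -
  have hmem : I.image σ ∈ (univ : Finset (Fin n)).powersetCard (n - k.val) := by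
    rw [mem_powersetCard] at hI ⊢
    exact ⟨subset_univ _, by rw [card_image_of_injective _ σ.injective]; exact hI.2⟩
  have hne : (I.image σ).Nonempty := by
    apply Finset.image_nonempty.mpr
    rw [← card_pos]
    have h := (mem_powersetCard.mp hI).2
    have hk := k.isLt
    omega
  have : I.inf' (Finset.image_nonempty.mp hne) (fun i => x (σ i))
      = (I.image σ).inf' hne x := by
    rw [inf'_image]
    rfl
  calc I.inf' _ (fun i => x (σ i)) = (I.image σ).inf' hne x := this
    _ ≤ Mk x k := by
        rw [Mk]
        exact Finset.le_sup' (f := fun J => J.1.inf' (card_pos.mp (by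
          have h := (mem_powersetCard.mp J.2).2
          have hk := k.isLt
          omega)) x) (mem_attach _ ⟨I.image σ, hmem⟩)

lemma Mk_perm {L : Type*} [Lattice L] {n : ℕ} (x : Fin n → L) (σ : Equiv.Perm (Fin n))
    (k : Fin n) : Mk (fun i => x (σ i)) k = Mk x k := by
  refine le_antisymm (Mk_perm_le x σ k) ?_
  have := Mk_perm_le (fun i => x (σ i)) σ⁻¹ k
  simpa using this

/-- If `T : E^n → Y` is an `n`-linear map on a vector lattice `E` whose restriction to
`(E⁺)^n` is total orderization invariant, then `T` is symmetric on all of `E`. -/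
theorem statement13 {E Y : Type*} [Lattice E] [AddCommGroup E] [Module ℝ E]
    [CovariantClass E E (· + ·) (· ≤ ·)] [PosSMulMono ℝ E]
    [AddCommGroup Y] [Module ℝ Y] {n : ℕ} (hn : 0 < n)
    (T : MultilinearMap ℝ (fun _ : Fin n => E) Y)
    (hT : ∀ x : Fin n → E, (∀ i, 0 ≤ x i) → T x = T (fun k => Mk x k))
    (σ : Equiv.Perm (Fin n)) (f : Fin n → E) :
    T (fun i => f (σ i)) = T f := by
  have key : ∀ (S : Finset (Fin n)) (g : Fin n → E), (∀ i ∉ S, 0 ≤ g i) →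
      T (fun i => g (σ i)) = T g := by
    intro S
    induction S using Finset.induction_on with
    | empty =>
      intro g hg
      have hg' : ∀ i, 0 ≤ g i := fun i => hg i (notMem_empty i)
      rw [hT g hg', hT (fun i => g (σ i)) (fun i => hg' _)]
      congr 1
      funext k
      exact Mk_perm g σ k
    | @insert j s hj ih =>
      intro g hg
      have hcomp : ∀ (c : E), (fun i => Function.update g j c (σ i))
          = Function.update (fun i => g (σ i)) (σ⁻¹ j) c := by
        intro c
        funext i
        rcases eq_or_ne i (σ⁻¹ j) with rfl | hne
        · rw [show σ (σ⁻¹ j) = j from σ.apply_symm_apply j, Function.update_self, Function.update_self]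
        · rw [Function.update_of_ne hne, Function.update_of_ne]
          intro h
          exact hne (by simp [← h])
      have hpos : ∀ (c : E), 0 ≤ c → (∀ i ∉ s, 0 ≤ Function.update g j c i) := by
        intro c hc i hi
        rcases eq_or_ne i j with rfl | hne
        · simpa using hc
        · rw [Function.update_of_ne hne]
          exact hg i (by simp [hne, hi])
      have hsplit : g = Function.update g j ((g j)⁺ - (g j)⁻) := by
        rw [posPart_sub_negPart, Function.update_eq_self]
      calc T (fun i => g (σ i))
          = T (Function.update (fun i => g (σ i)) (σ⁻¹ j) ((g j)⁺ - (g j)⁻)) := by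
            rw [← hcomp, ← hsplit]
        _ = T (Function.update (fun i => g (σ i)) (σ⁻¹ j) (g j)⁺)
            - T (Function.update (fun i => g (σ i)) (σ⁻¹ j) (g j)⁻) := by
            rw [T.map_update_sub]
        _ = T (fun i => Function.update g j (g j)⁺ (σ i))
            - T (fun i => Function.update g j (g j)⁻ (σ i)) := by
            rw [hcomp, hcomp]
        _ = T (Function.update g j (g j)⁺) - T (Function.update g j (g j)⁻) := by
            rw [ih _ (hpos _ (posPart_nonneg _)), ih _ (hpos _ (negPart_nonneg _))]
        _ = T g := by rw [← T.map_update_sub, ← hsplit]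
  exact key univ f (by simp)
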